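/- Let g : [0,∞) → [1,∞) be defined by g(x) = exp(x)/(1+x). Let X : Ω → ℝⁿ be a random vector with mean μ ∈ ℝⁿ that is sub-Gaussian with matrix variance proxy Σ ≻ 0. Then for any δ ∈ (0,1), Pr{ ‖X − μ‖²_{Σ⁻¹} ≤ n + n·g⁻¹(δ^{−2/n}) } ≥ 1 − δ, where g⁻¹ denotes the inverse of g on [0,∞) and ‖x‖²_{Σ⁻¹} := xᵀΣ⁻¹x. -/

import Mathlib

open MeasureTheory Matrix

noncomputable section

/-- A random vector `X` with mean `μ` is sub-Gaussian with matrix variance proxy `S`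
(`X ~ SG(μ, S)`): its moment generating function exists and
`E[exp(λᵀ(X − μ))] ≤ exp(λᵀ S λ / 2)` for all `λ ∈ ℝⁿ`. -/
def IsSubGaussianMat {Ω : Type*} [MeasurableSpace Ω] {n : ℕ} (P : Measure Ω)
    (X : Ω → Fin n → ℝ) (μ : Fin n → ℝ) (S : Matrix (Fin n) (Fin n) ℝ) : Prop :=
  ∀ l : Fin n → ℝ,
    Integrable (fun ω => Real.exp (l ⬝ᵥ (X ω - μ))) P ∧
    ∫ ω, Real.exp (l ⬝ᵥ (X ω - μ)) ∂P ≤ Real.exp ((l ⬝ᵥ (S *ᵥ l)) / 2)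

/-- The function `g(x) = exp(x)/(1+x)`, a strictly increasing bijection from `[0,∞)`
onto `[1,∞)`. -/
def g (x : ℝ) : ℝ := Real.exp x / (1 + x)

/-- The inverse of `g` on `[0, ∞)`. -/
def gInv (y : ℝ) : ℝ := Function.invFunOn g (Set.Ici 0) y

open Real in
lemma exp_quad_eq' (b p : ℝ) (x : ℝ) :
    Complex.exp (-(p:ℂ) * x ^ 2 + b * x + 0) = ((Real.exp (b * x - p * x ^ 2) : ℝ) : ℂ) := by
  rw [Complex.ofReal_exp]; push_cast; ring_nf

open Real in
lemma integrable_exp_quad (b : ℝ) {p : ℝ} (hp : 0 < p) :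
    Integrable (fun x : ℝ => Real.exp (b * x - p * x ^ 2)) := by
  have h := (integrable_cexp_quadratic (b := (p : ℂ)) (by simpa using hp) b 0).re
  refine h.congr (Filter.Eventually.of_forall fun x => ?_)
  have := exp_quad_eq' b p x
  simp only [RCLike.re_eq_complex_re, this, Complex.ofReal_re]

open Real in
lemma integral_exp_quad (b : ℝ) {p : ℝ} (hp : 0 < p) :
    ∫ x : ℝ, Real.exp (b * x - p * x ^ 2) = Real.sqrt (π / p) * Real.exp (b ^ 2 / (4 * p)) := by
  have h := integral_cexp_quadratic (b := (-p : ℂ)) (by simpa using hp) b 0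
  simp_rw [neg_neg, exp_quad_eq' b p] at h
  have h4 : (∫ x : ℝ, ((Real.exp (b*x - p*x^2) : ℝ) : ℂ))
      = ((∫ x : ℝ, Real.exp (b*x - p*x^2) : ℝ) : ℂ) := integral_ofReal
  rw [h4] at h
  have h2 : (((π:ℂ) / (p:ℂ)) ^ (1 / 2 : ℂ) : ℂ) = ((Real.sqrt (π / p) : ℝ) : ℂ) := by
    rw [show ((π:ℂ) / (p:ℂ)) = ((π / p : ℝ) : ℂ) by push_cast; ring,
      show (1/2 : ℂ) = ((1/2 : ℝ) : ℂ) by norm_num,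
      ← Complex.ofReal_cpow (by positivity)]
    norm_num [Real.sqrt_eq_rpow]
  have h3 : Complex.exp (0 - (b:ℂ) ^ 2 / (4 * -(p:ℂ))) = ((Real.exp (b ^ 2 / (4 * p)) : ℝ) : ℂ) := by
    rw [Complex.ofReal_exp]; congr 1; push_cast; field_simp; ring
  rw [h2, h3, ← Complex.ofReal_mul] at h
  exact_mod_cast h

open Real in
lemma gInv_spec {y : ℝ} (hy : 1 ≤ y) : 0 ≤ gInv y ∧ g (gInv y) = y := by
  have hgM : y ≤ g (54 * y) := by
    set M := 54 * y with hM
    have hE : M/3 + 1 ≤ Real.exp (M/3) := Real.add_one_le_exp (M/3)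
    have hE3 : (M/3 + 1)^3 ≤ (Real.exp (M/3))^3 :=
      pow_le_pow_left₀ (by positivity) hE 3
    have hexp : Real.exp M = (Real.exp (M/3))^3 := by
      rw [← Real.exp_nat_mul]; norm_num; ring_nf
    rw [g, le_div_iff₀ (by linarith : (0:ℝ) < 1 + M), hexp]
    have h18 : M/3 + 1 = 18*y + 1 := by rw [hM]; ring
    rw [h18] at hE3
    nlinarith [hE3, hy, sq_nonneg y]
  have hcont : ContinuousOn g (Set.Icc 0 (54 * y)) := by
    apply ContinuousOn.div
    · exact Real.continuous_exp.continuousOn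
    · exact (continuous_const.add continuous_id).continuousOn
    · intro x hx; nlinarith [hx.1]
  have h0 : g 0 = 1 := by simp [g]
  have hmem : y ∈ Set.Icc (g 0) (g (54 * y)) := by rw [h0]; exact ⟨hy, hgM⟩
  obtain ⟨x, hx, hgx⟩ := intermediate_value_Icc (by linarith : (0:ℝ) ≤ 54 * y) hcont hmem
  have hex : ∃ a ∈ Set.Ici (0:ℝ), g a = y := ⟨x, hx.1, hgx⟩
  exact ⟨Function.invFunOn_mem hex, Function.invFunOn_eq hex⟩

open Real in
/-- Gaussian-type integral over `ℝⁿ`. -/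
lemma lintegral_exp_dot {n : ℕ} (w : Fin n → ℝ) {p : ℝ} (hp : 0 < p) :
    ∫⁻ u : Fin n → ℝ, ENNReal.ofReal (Real.exp (w ⬝ᵥ u - p * (u ⬝ᵥ u))) =
      ENNReal.ofReal ((Real.sqrt (π / p))^n * Real.exp ((∑ i, (w i)^2) / (4*p))) := by
  have hprod : ∀ u : Fin n → ℝ, Real.exp (w ⬝ᵥ u - p * (u ⬝ᵥ u))
      = ∏ i, Real.exp (w i * u i - p * (u i)^2) := by
    intro u
    rw [← Real.exp_sum]
    congr 1
    simp only [dotProduct]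
    rw [Finset.mul_sum, ← Finset.sum_sub_distrib]
    exact Finset.sum_congr rfl fun i _ => by ring
  have hint : Integrable (fun u : Fin n → ℝ => ∏ i, Real.exp (w i * (u i) - p * (u i)^2)) :=
    Integrable.fintype_prod (𝕜 := ℝ) fun i => integrable_exp_quad (w i) hp
  simp_rw [hprod]
  rw [← ofReal_integral_eq_lintegral_ofReal hint (Filter.Eventually.of_forall fun u =>
    Finset.prod_nonneg fun i _ => (Real.exp_nonneg _))]
  rw [integral_fintype_prod_volume_eq_prod (ι := Fin n) (f := fun i t => Real.exp (w i * t - p * t^2))]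
  congr 1
  simp_rw [integral_exp_quad _ hp]
  rw [Finset.prod_mul_distrib, Finset.prod_const, ← Real.exp_sum, Finset.card_univ,
    Fintype.card_fin, ← Finset.sum_div]

open scoped MatrixOrder in
lemma exists_sqrt_sym {n : ℕ} {A : Matrix (Fin n) (Fin n) ℝ} (hA : A.PosSemidef) :
    ∃ R : Matrix (Fin n) (Fin n) ℝ, Rᵀ = R ∧ R * R = A := by
  refine ⟨CFC.sqrt A, ?_, CFC.sqrt_mul_sqrt_self A (Matrix.nonneg_iff_posSemidef.mpr hA)⟩
  have := (Matrix.nonneg_iff_posSemidef.mp (CFC.sqrt_nonneg A)).isHermitian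
  rwa [Matrix.IsHermitian, Matrix.conjTranspose_eq_transpose_of_trivial] at this

/-- elliptical confidence bound. If `X ~ SG(μ, Σ)` with `Σ ≻ 0`, then for
any `δ ∈ (0,1)`, `Pr{‖X − μ‖²_{Σ⁻¹} ≤ n + n g⁻¹(δ^{−2/n})} ≥ 1 − δ`. -/
theorem subGaussian_elliptical_confidence {Ω : Type*} [MeasurableSpace Ω] {n : ℕ}
    (P : Measure Ω) [IsProbabilityMeasure P]
    (X : Ω → Fin n → ℝ) (hX : Measurable X) (μ : Fin n → ℝ)
    (Sig : Matrix (Fin n) (Fin n) ℝ) (hSig : Sig.PosDef)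
    (hsg : IsSubGaussianMat P X μ Sig)
    (δ : ℝ) (hδ : δ ∈ Set.Ioo (0 : ℝ) 1) :
    ENNReal.ofReal (1 - δ) ≤
      P {ω | (X ω - μ) ⬝ᵥ (Sig⁻¹ *ᵥ (X ω - μ)) ≤
        (n : ℝ) + n * gInv (δ ^ (-(2 : ℝ) / n)) } := by
  obtain ⟨hδ0, hδ1⟩ := hδ
  rcases Nat.eq_zero_or_pos n with hn | hn
  · subst hn
    have hset : {ω | (X ω - μ) ⬝ᵥ ((Sig⁻¹) *ᵥ (X ω - μ)) ≤
        ((0:ℕ) : ℝ) + (0:ℕ) * gInv (δ ^ (-(2 : ℝ) / (0:ℕ))) } = Set.univ := by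
      ext ω; simp [dotProduct]
    rw [hset, measure_univ]
    exact ENNReal.ofReal_le_one.mpr (by linarith)
  have hn0 : (n:ℝ) ≠ 0 := Nat.cast_ne_zero.mpr hn.ne'
  set y : ℝ := δ ^ (-(2:ℝ) / n) with hy_def
  have hy1 : 1 ≤ y := by
    apply Real.one_le_rpow_of_pos_of_le_one_of_nonpos hδ0 hδ1.le
    apply div_nonpos_of_nonpos_of_nonneg <;> [norm_num; positivity]
  set a : ℝ := gInv y with ha_def
  obtain ⟨ha0, hga⟩ := gInv_spec hy1
  rw [← ha_def] at hga ha0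
  set c : ℝ := 1 + a with hc_def
  have hc0 : (0:ℝ) < c := by rw [hc_def]; linarith
  have hgay : Real.exp a / c = y := by rw [hc_def]; exact hga
  -- matrix setup
  have hSi : (Sig⁻¹).PosDef := hSig.inv
  obtain ⟨R, hRH, hRR⟩ := exists_sqrt_sym hSi.posSemidef
  have hmove : ∀ v w : Fin n → ℝ, (R *ᵥ v) ⬝ᵥ w = v ⬝ᵥ (R *ᵥ w) := by
    intro v w
    rw [dotProduct_comm, Matrix.dotProduct_mulVec, ← Matrix.mulVec_transpose, hRH,
      dotProduct_comm]
  have hRSR : R * Sig * R = 1 := by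
    have hdet : IsUnit Sig.det := hSig.det_pos.ne'.isUnit
    have h1 : R * (R * Sig) = 1 := by
      rw [← Matrix.mul_assoc, hRR, Matrix.nonsing_inv_mul _ hdet]
    calc R * Sig * R = (R * Sig) * R := rfl
      _ = 1 := mul_eq_one_comm.mp h1
  set z : Ω → Fin n → ℝ := fun ω => R *ᵥ (X ω - μ) with hz_def
  have hq : ∀ ω, (X ω - μ) ⬝ᵥ (Sig⁻¹ *ᵥ (X ω - μ)) = (z ω) ⬝ᵥ (z ω) := by
    intro ω
    rw [hz_def, ← hRR, ← Matrix.mulVec_mulVec, ← hmove]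
  have hquad : ∀ u : Fin n → ℝ, (R *ᵥ u) ⬝ᵥ (Sig *ᵥ (R *ᵥ u)) = u ⬝ᵥ u := by
    intro u
    rw [Matrix.mulVec_mulVec, hmove, Matrix.mulVec_mulVec, ← Matrix.mul_assoc, hRSR,
      Matrix.one_mulVec]
  -- measurability
  have hzmeas : ∀ i, Measurable (fun ω => z ω i) := by
    intro i
    simp only [hz_def, Matrix.mulVec, dotProduct, Pi.sub_apply]
    exact Finset.measurable_sum _ fun j _ =>
      measurable_const.mul (((measurable_pi_apply j).comp hX).sub measurable_const)
  have hqmeas : Measurable (fun ω => (z ω) ⬝ᵥ (z ω)) := by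
    simp only [dotProduct]
    exact Finset.measurable_sum _ fun i _ => (hzmeas i).mul (hzmeas i)
  -- the key exponential moment bound
  have key : ∫⁻ ω, ENNReal.ofReal (Real.exp (a * ((z ω) ⬝ᵥ (z ω)) / (2*c))) ∂P
      ≤ ENNReal.ofReal ((Real.sqrt c)^n) := by
    set w : Ω → Fin n → ℝ := fun ω i => Real.sqrt a * z ω i with hw_def
    set F : Ω → (Fin n → ℝ) → ENNReal := fun ω u =>
      ENNReal.ofReal (Real.exp ((w ω) ⬝ᵥ u - (c/2) * (u ⬝ᵥ u))) with hF_def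
    have hFmeas : AEMeasurable (Function.uncurry F) (P.prod volume) := by
      apply Measurable.aemeasurable
      apply Measurable.ennreal_ofReal
      apply Real.measurable_exp.comp
      apply Measurable.sub
      · simp only [Function.uncurry, dotProduct, hw_def]
        exact Finset.measurable_sum _ fun i _ =>
          (measurable_const.mul ((hzmeas i).comp measurable_fst)).mul
            ((measurable_pi_apply i).comp measurable_snd)
      · apply Measurable.const_mul
        simp only [Function.uncurry, dotProduct]
        exact Finset.measurable_sum _ fun i _ =>
          ((measurable_pi_apply i).comp measurable_snd).mul
            ((measurable_pi_apply i).comp measurable_snd)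
    have hsum : ∀ ω, ∑ i, (w ω i)^2 = a * ((z ω) ⬝ᵥ (z ω)) := by
      intro ω
      simp only [hw_def, dotProduct, Finset.mul_sum]
      exact Finset.sum_congr rfl fun i _ => by
        rw [mul_pow, Real.sq_sqrt ha0]; ring
    have stepA : ∀ ω, (∫⁻ u, F ω u)
        = ENNReal.ofReal ((Real.sqrt (Real.pi/(c/2)))^n)
          * ENNReal.ofReal (Real.exp (a * ((z ω) ⬝ᵥ (z ω)) / (2*c))) := by
      intro ω
      rw [hF_def, lintegral_exp_dot (w ω) (half_pos hc0),
        ← ENNReal.ofReal_mul (by positivity)]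
      congr 2
      rw [hsum ω, show (4:ℝ)*(c/2) = 2*c by ring]
    have stepB : ∀ u : Fin n → ℝ,
        (∫⁻ ω, F ω u ∂P) ≤ ENNReal.ofReal (Real.exp (-(u ⬝ᵥ u) / 2)) := by
      intro u
      obtain ⟨hint, hbound⟩ := hsg (Real.sqrt a • (R *ᵥ u))
      set l : Fin n → ℝ := Real.sqrt a • (R *ᵥ u) with hl_def
      have hldot : ∀ ω, (w ω) ⬝ᵥ u = l ⬝ᵥ (X ω - μ) := by
        intro ω
        rw [hl_def, smul_dotProduct, hmove]
        have hzz : u ⬝ᵥ (R *ᵥ (X ω - μ)) = u ⬝ᵥ z ω := rfl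
        rw [hzz, smul_eq_mul, dotProduct_comm u (z ω)]
        simp only [hw_def, dotProduct, Finset.mul_sum]
        exact Finset.sum_congr rfl fun i _ => by ring
      have hlSl : l ⬝ᵥ (Sig *ᵥ l) = a * (u ⬝ᵥ u) := by
        rw [hl_def, Matrix.mulVec_smul, smul_dotProduct, dotProduct_smul,
          hquad u, smul_eq_mul, smul_eq_mul, ← mul_assoc, Real.mul_self_sqrt ha0]
      calc (∫⁻ ω, F ω u ∂P)
          = (∫⁻ ω, ENNReal.ofReal (Real.exp (l ⬝ᵥ (X ω - μ))) ∂P)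
            * ENNReal.ofReal (Real.exp (-(c/2) * (u ⬝ᵥ u))) := by
            rw [← lintegral_mul_const' _ _ ENNReal.ofReal_ne_top]
            congr 1; funext ω
            rw [hF_def]; beta_reduce
            rw [show (w ω) ⬝ᵥ u - (c/2)*(u ⬝ᵥ u)
                = l ⬝ᵥ (X ω - μ) + (-(c/2) * (u ⬝ᵥ u)) by rw [hldot ω]; ring,
              Real.exp_add, ENNReal.ofReal_mul (Real.exp_nonneg _)]
        _ ≤ ENNReal.ofReal (Real.exp ((l ⬝ᵥ (Sig *ᵥ l)) / 2))
            * ENNReal.ofReal (Real.exp (-(c/2) * (u ⬝ᵥ u))) := by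
            gcongr
            rw [← ofReal_integral_eq_lintegral_ofReal hint
              (Filter.Eventually.of_forall fun ω => Real.exp_nonneg _)]
            exact ENNReal.ofReal_le_ofReal hbound
        _ = ENNReal.ofReal (Real.exp (-(u ⬝ᵥ u) / 2)) := by
            rw [hlSl, ← ENNReal.ofReal_mul (Real.exp_nonneg _), ← Real.exp_add]
            congr 1
            rw [hc_def]; ring
    have hswap := lintegral_lintegral_swap (μ := P) (ν := (volume : Measure (Fin n → ℝ))) hFmeas
    have hgauss : (∫⁻ u : Fin n → ℝ, ENNReal.ofReal (Real.exp (-(u ⬝ᵥ u) / 2)))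
        = ENNReal.ofReal ((Real.sqrt (Real.pi/(1/2:ℝ)))^n) := by
      have h0 := lintegral_exp_dot (n := n) (fun _ => (0:ℝ)) (p := (1/2:ℝ)) one_half_pos
      rw [show (fun u : Fin n → ℝ => ENNReal.ofReal (Real.exp (-(u ⬝ᵥ u) / 2)))
          = fun u : Fin n → ℝ => ENNReal.ofReal
              (Real.exp ((fun _ => (0:ℝ)) ⬝ᵥ u - (1/2) * (u ⬝ᵥ u))) from
        funext fun u => by
          congr 2
          simp only [dotProduct, zero_mul, Finset.sum_const_zero]
          ring]
      rw [h0]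
      norm_num
    have h1 : ENNReal.ofReal ((Real.sqrt (Real.pi/(c/2)))^n)
        * (∫⁻ ω, ENNReal.ofReal (Real.exp (a * ((z ω) ⬝ᵥ (z ω)) / (2*c))) ∂P)
        ≤ ENNReal.ofReal ((Real.sqrt (Real.pi/(1/2:ℝ)))^n) := by
      calc _ = ∫⁻ ω, (∫⁻ u, F ω u) ∂P := by
            simp_rw [stepA]
            rw [lintegral_const_mul' _ _ ENNReal.ofReal_ne_top]
        _ = ∫⁻ u, ∫⁻ ω, F ω u ∂P := hswap
        _ ≤ ∫⁻ u : Fin n → ℝ, ENNReal.ofReal (Real.exp (-(u ⬝ᵥ u) / 2)) :=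
            lintegral_mono stepB
        _ = _ := hgauss
    have hfac : ENNReal.ofReal ((Real.sqrt (Real.pi/(c/2)))^n)
        * ENNReal.ofReal ((Real.sqrt c)^n)
        = ENNReal.ofReal ((Real.sqrt (Real.pi/(1/2:ℝ)))^n) := by
      rw [← ENNReal.ofReal_mul (by positivity), ← mul_pow,
        ← Real.sqrt_mul (by positivity)]
      congr 3
      field_simp
    rw [← ENNReal.mul_le_mul_iff_right
      (show ENNReal.ofReal ((Real.sqrt (Real.pi/(c/2)))^n) ≠ 0 by
        simp only [ne_eq, ENNReal.ofReal_eq_zero, not_le]; positivity)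
      ENNReal.ofReal_ne_top, hfac]
    exact h1
  -- Markov + numerics
  have hδval : (Real.sqrt c)^n * Real.exp (-((n:ℝ) * a / 2)) = δ := by
    have h1 : Real.exp (-((n:ℝ)*a/2)) = (Real.exp (-(a/2)))^n := by
      rw [← Real.exp_nat_mul]; congr 1; ring
    rw [h1, ← mul_pow]
    have he : Real.exp (-(a/2)) = Real.sqrt (Real.exp (-a)) := by
      rw [show Real.exp (-a) = (Real.exp (-(a/2)))^2 by rw [sq, ← Real.exp_add]; ring_nf,
        Real.sqrt_sq (Real.exp_nonneg _)]
    rw [he, ← Real.sqrt_mul hc0.le]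
    have hval : c * Real.exp (-a) = δ ^ ((2:ℝ)/n) := by
      have h5 : c * Real.exp (-a) = (Real.exp a / c)⁻¹ := by
        rw [Real.exp_neg]; field_simp
      rw [h5, hgay, hy_def, show -(2:ℝ)/n = -((2:ℝ)/n) by ring,
        Real.rpow_neg hδ0.le, inv_inv]
    rw [hval, Real.sqrt_eq_rpow, ← Real.rpow_natCast ((δ ^ ((2:ℝ)/n)) ^ (1/2:ℝ)) n,
      ← Real.rpow_mul (by positivity), ← Real.rpow_mul hδ0.le]
    rw [show (2:ℝ)/n * ((1/2:ℝ) * (n:ℝ)) = 1 by field_simp, Real.rpow_one]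
  set T := {ω | (X ω - μ) ⬝ᵥ (Sig⁻¹ *ᵥ (X ω - μ)) ≤ (n : ℝ) + n * a} with hT_def
  have hTmeas : MeasurableSet T := by
    have : T = (fun ω => (z ω) ⬝ᵥ (z ω)) ⁻¹' (Set.Iic ((n:ℝ) + n * a)) := by
      ext ω; simp only [hT_def, Set.mem_setOf_eq, Set.mem_preimage, Set.mem_Iic, hq ω]
    rw [this]; exact hqmeas measurableSet_Iic
  have hcompl : P Tᶜ ≤ ENNReal.ofReal δ := by
    have hexp_ne : ENNReal.ofReal (Real.exp ((n:ℝ)*a/2)) ≠ 0 := by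
      simp [Real.exp_pos]
    have hmarkov : ENNReal.ofReal (Real.exp ((n:ℝ)*a/2)) * P Tᶜ
        ≤ ENNReal.ofReal ((Real.sqrt c)^n) := by
      calc ENNReal.ofReal (Real.exp ((n:ℝ)*a/2)) * P Tᶜ
          = ∫⁻ _ω in Tᶜ, ENNReal.ofReal (Real.exp ((n:ℝ)*a/2)) ∂P := by
            rw [setLIntegral_const]
        _ ≤ ∫⁻ ω in Tᶜ, ENNReal.ofReal (Real.exp (a * ((z ω) ⬝ᵥ (z ω)) / (2*c))) ∂P := by
            apply setLIntegral_mono (by fun_prop) ?_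
            intro ω hω
            apply ENNReal.ofReal_le_ofReal
            apply Real.exp_le_exp.mpr
            have hgt : (n:ℝ) + n*a < (z ω ⬝ᵥ z ω) := by
              have := hω
              simp only [hT_def, Set.mem_compl_iff, Set.mem_setOf_eq, not_le, hq ω] at this
              exact this
            have hnc : (n:ℝ)*c ≤ z ω ⬝ᵥ z ω := by rw [hc_def]; nlinarith
            calc (n:ℝ)*a/2 = a*((n:ℝ)*c)/(2*c) := by field_simp
              _ ≤ a * (z ω ⬝ᵥ z ω) / (2*c) := by gcongr
        _ ≤ ∫⁻ ω, ENNReal.ofReal (Real.exp (a * ((z ω) ⬝ᵥ (z ω)) / (2*c))) ∂P :=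
            setLIntegral_le_lintegral _ _
        _ ≤ ENNReal.ofReal ((Real.sqrt c)^n) := key
    have h2 : ENNReal.ofReal (Real.exp ((n:ℝ)*a/2)) * ENNReal.ofReal δ
        = ENNReal.ofReal ((Real.sqrt c)^n) := by
      rw [← hδval, ← ENNReal.ofReal_mul (Real.exp_nonneg _)]
      congr 1
      rw [mul_comm ((Real.sqrt c)^n) _, ← mul_assoc, ← Real.exp_add]
      rw [show (n:ℝ)*a/2 + -((n:ℝ)*a/2) = 0 by ring, Real.exp_zero, one_mul]
    rw [← ENNReal.mul_le_mul_iff_right hexp_ne ENNReal.ofReal_ne_top, h2]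
    exact hmarkov
  have hPT : P T = 1 - P Tᶜ := by
    have h := prob_compl_eq_one_sub (μ := P) hTmeas.compl
    rwa [compl_compl] at h
  calc ENNReal.ofReal (1 - δ) = 1 - ENNReal.ofReal δ := by
        rw [ENNReal.ofReal_sub _ hδ0.le, ENNReal.ofReal_one]
    _ ≤ 1 - P Tᶜ := tsub_le_tsub_left hcompl 1
    _ = P T := hPT.symm
    _ = _ := rfl
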